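/- arXiv:2209.04120 — 2 statements merged into one kernel-verified Lean document; each statement's English description precedes it below -/
import Mathlib

section
/- Let G = K_r be the complete graph on r ≥ 2 vertices and let α > 0. The family of moments m_a = Π_{i=1}^r (α)_{a_i} / (rα)_{|a|}, where (x)_k = x(x+1)···(x+k−1) is the rising factorial and |a| = a_1 + ... + a_r, satisfies m_0 = 1 and the recurrence 0 = Σ_{i∈V} Σ_{j≠i} [a_i(a_i−1)/2] m_{a−e_i+e_j} − Σ_{i∈V} Σ_{j≠i} [a_i a_j / 2] m_a + (α/2) Σ_{i∈V} a_i (m_{a−e_i} − r m_a) for every a ∈ ℕ_0^r with a ≠ 0 (terms with a_i = 0 interpreted as zero). -/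
open Finset

/-- On the complete graph `K_r` (`r ≥ 2`), the symmetric Dirichlet moments
`m_a = Π_i (α)_{a_i} / (rα)_{|a|}` satisfy `m_0 = 1` and the stationary moment
recurrence with mutation rate `α > 0`. -/
theorem stmt_4 (r : ℕ) (hr : 2 ≤ r) (α : ℝ) (hα : 0 < α)
    (m : (Fin r → ℕ) → ℝ)
    (hm : ∀ a : Fin r → ℕ,
      m a = (∏ i, (ascPochhammer ℝ (a i)).eval α) /
        (ascPochhammer ℝ (∑ i, a i)).eval ((r : ℝ) * α)) :
    m 0 = 1 ∧
    ∀ a : Fin r → ℕ, a ≠ 0 →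
      (0 : ℝ) =
        (∑ i : Fin r, ∑ j ∈ Finset.univ.erase i,
          (a i : ℝ) * ((a i : ℝ) - 1) / 2 *
            m (fun k => a k - (if k = i then 1 else 0) + (if k = j then 1 else 0)))
        - (∑ i : Fin r, ∑ j ∈ Finset.univ.erase i,
            (a i : ℝ) * (a j : ℝ) / 2 * m a)
        + α / 2 * ∑ i : Fin r,
            (a i : ℝ) * (m (fun k => a k - (if k = i then 1 else 0)) - (r : ℝ) * m a) := by
  have hrα : (0:ℝ) < (r:ℝ) * α := by
    have h0 : 0 < r := by omega
    exact mul_pos (by exact_mod_cast h0) hα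
  have hQ : ∀ n : ℕ, (0:ℝ) < (ascPochhammer ℝ n).eval ((r:ℝ) * α) :=
    fun n => ascPochhammer_pos n _ hrα
  constructor
  · rw [hm]; simp
  · intro a _
    rw [Finset.mul_sum, ← Finset.sum_sub_distrib, ← Finset.sum_add_distrib]
    symm
    apply Finset.sum_eq_zero
    intro i _
    rcases Nat.eq_zero_or_pos (a i) with h0 | hpos
    · simp [h0]
    obtain ⟨b, hb⟩ : ∃ b, a i = b + 1 := ⟨a i - 1, by omega⟩
    have hαb : (0:ℝ) < α + (b:ℝ) := by positivity
    have hPpos : ∀ n : ℕ, (0:ℝ) < (ascPochhammer ℝ n).eval α :=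
      fun n => ascPochhammer_pos n _ hα
    -- ratio identity for m (a - e_i)
    have hsub : m (fun k => a k - (if k = i then 1 else 0)) =
        m a * ((r:ℝ) * α + ((b:ℝ) + ∑ j ∈ univ.erase i, (a j : ℝ))) / (α + b) := by
      set f : Fin r → ℕ := fun k => a k - (if k = i then 1 else 0) with hf
      have hsumf : ∑ k, f k = (b + ∑ k ∈ univ.erase i, a k) := by
        rw [← Finset.add_sum_erase univ f (mem_univ i)]
        congr 1
        · simp [hf, hb]
        · exact Finset.sum_congr rfl fun k hk => by
            simp [hf, Finset.ne_of_mem_erase hk]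
      have hsuma : ∑ k, a k = (b + ∑ k ∈ univ.erase i, a k) + 1 := by
        rw [← Finset.add_sum_erase univ a (mem_univ i), hb]; ring
      have hprodf : ∏ k, (ascPochhammer ℝ (f k)).eval α =
          (ascPochhammer ℝ b).eval α * ∏ k ∈ univ.erase i, (ascPochhammer ℝ (a k)).eval α := by
        rw [← Finset.mul_prod_erase univ _ (mem_univ i)]
        congr 1
        · simp [hf, hb]
        · exact Finset.prod_congr rfl fun k hk => by
            simp [hf, Finset.ne_of_mem_erase hk]
      have hproda : ∏ k, (ascPochhammer ℝ (a k)).eval α =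
          (ascPochhammer ℝ (b+1)).eval α * ∏ k ∈ univ.erase i, (ascPochhammer ℝ (a k)).eval α := by
        rw [← Finset.mul_prod_erase univ _ (mem_univ i), hb]
      have hcast : ((b + ∑ k ∈ univ.erase i, a k : ℕ) : ℝ)
          = (b:ℝ) + ∑ j ∈ univ.erase i, (a j : ℝ) := by push_cast; ring
      rw [hm f, hm a, hsumf, hsuma, hprodf, hproda, ascPochhammer_succ_eval,
        ascPochhammer_succ_eval]
      have h1 := (hQ (b + ∑ k ∈ univ.erase i, a k)).ne'
      have hX : (0:ℝ) < (r:ℝ) * α + ((b:ℝ) + ∑ j ∈ univ.erase i, (a j : ℝ)) := by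
        have hs : (0:ℝ) ≤ ∑ j ∈ univ.erase i, (a j : ℝ) :=
          Finset.sum_nonneg fun j _ => Nat.cast_nonneg _
        have hb0 : (0:ℝ) ≤ (b:ℝ) := Nat.cast_nonneg _
        linarith
      rw [hcast, div_mul_eq_mul_div, div_div,
        div_eq_div_iff h1 (mul_ne_zero (mul_ne_zero h1 hX.ne') hαb.ne')]
      ring
    -- ratio identity for m (a - e_i + e_j)
    have hmove : ∀ j ∈ univ.erase i,
        m (fun k => a k - (if k = i then 1 else 0) + (if k = j then 1 else 0)) =
        m a * (α + (a j : ℝ)) / (α + b) := by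
      intro j hj
      have hji : j ≠ i := Finset.ne_of_mem_erase hj
      set g : Fin r → ℕ :=
        fun k => a k - (if k = i then 1 else 0) + (if k = j then 1 else 0) with hg
      have hgi : g i = b := by simp [hg, hb, hji.symm]
      have hgj : g j = a j + 1 := by simp [hg, hji]
      have hgk : ∀ k, k ≠ i → k ≠ j → g k = a k := by
        intro k h1 h2; simp [hg, h1, h2]
      have hsumg : ∑ k, g k = ∑ k, a k := by
        rw [← Finset.add_sum_erase univ g (mem_univ i),
          ← Finset.add_sum_erase _ g hj,
          ← Finset.add_sum_erase univ a (mem_univ i),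
          ← Finset.add_sum_erase _ a hj, hgi, hgj, hb]
        have : ∑ k ∈ (univ.erase i).erase j, g k = ∑ k ∈ (univ.erase i).erase j, a k :=
          Finset.sum_congr rfl fun k hk =>
            hgk k (Finset.ne_of_mem_erase (Finset.mem_of_mem_erase hk))
              (Finset.ne_of_mem_erase hk)
        omega
      have hprodg : ∏ k, (ascPochhammer ℝ (g k)).eval α =
          (ascPochhammer ℝ b).eval α * ((ascPochhammer ℝ (a j + 1)).eval α *
            ∏ k ∈ (univ.erase i).erase j, (ascPochhammer ℝ (a k)).eval α) := by
        rw [← Finset.mul_prod_erase univ _ (mem_univ i), ← Finset.mul_prod_erase _ _ hj, hgi, hgj]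
        congr 2
        exact Finset.prod_congr rfl fun k hk => by
          rw [hgk k (Finset.ne_of_mem_erase (Finset.mem_of_mem_erase hk))
            (Finset.ne_of_mem_erase hk)]
      have hproda : ∏ k, (ascPochhammer ℝ (a k)).eval α =
          (ascPochhammer ℝ (b+1)).eval α * ((ascPochhammer ℝ (a j)).eval α *
            ∏ k ∈ (univ.erase i).erase j, (ascPochhammer ℝ (a k)).eval α) := by
        rw [← Finset.mul_prod_erase univ _ (mem_univ i), ← Finset.mul_prod_erase _ _ hj, hb]
      rw [hm g, hm a, hsumg, hprodg, hproda, ascPochhammer_succ_eval, ascPochhammer_succ_eval]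
      have h1 := (hQ (∑ k, a k)).ne'
      rw [div_mul_eq_mul_div, div_div,
        div_eq_div_iff h1 (mul_ne_zero h1 hαb.ne')]
      ring
    -- rewrite the inner sums and finish by algebra
    rw [Finset.sum_congr rfl (fun j hj => by rw [hmove j hj]), hsub]
    have e1 : (∑ j ∈ univ.erase i, (a i:ℝ) * ((a i:ℝ) - 1) / 2 *
        (m a * (α + (a j:ℝ)) / (α + b)))
        = (a i:ℝ) * ((a i:ℝ) - 1) / 2 * m a / (α + b) *
          ∑ j ∈ univ.erase i, (α + (a j:ℝ)) := by
      rw [Finset.mul_sum]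
      exact Finset.sum_congr rfl fun j _ => by ring
    have e2 : ∑ j ∈ univ.erase i, (α + (a j:ℝ))
        = ((r:ℝ) - 1) * α + ∑ j ∈ univ.erase i, (a j:ℝ) := by
      rw [Finset.sum_add_distrib, Finset.sum_const, card_erase_of_mem (mem_univ i),
        card_univ, Fintype.card_fin, nsmul_eq_mul, Nat.cast_sub (by omega)]
      simp
    have e3 : ∑ j ∈ univ.erase i, (a i:ℝ) * (a j:ℝ) / 2 * m a
        = (a i:ℝ) / 2 * m a * ∑ j ∈ univ.erase i, (a j:ℝ) := by
      rw [Finset.mul_sum]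
      exact Finset.sum_congr rfl fun j _ => by ring
    rw [e1, e2, e3]
    have hA : (a i : ℝ) = (b:ℝ) + 1 := by rw [hb]; push_cast; ring
    rw [hA]
    field_simp [hαb.ne']
    ring
end

section
/- Let V_I be a finite index set with |V_I| = m ≥ 1 and let c : V_I → ℝ satisfy Σ_{i∈V_I} c_i = 0. For any integer n ≥ m + 1 and any vector x of indeterminates, Σ_{i∈V_I} c_i Σ_{a: Σ a_k = n−1, a ≥ 1} x^{a} f(n−1, a) evaluated termwise shows: Σ_{a: Σ_{k∈V_I} a_k = n, a_k ≥ 1} f(n,a) Σ_{i∈V_I} a_i(a_i−1) x^{a−e_i} = 0, where f(n,a) = ((n−m) choose (a−1)) · (n choose a) · c^a with (n choose a) = n!/Π_{k∈V_I} a_k! and ((n−m) choose (a−1)) = (n−m)!/Π_{k∈V_I}(a_k−1)!. -/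
open scoped Classical in
/-- Algebraic cancellation identity underlying the martingale property of the
invariant polynomials: for a finite index set of size `m`, weights `c` with
`Σ c_i = 0`, `n ≥ m + 1`, and indeterminates `x`,
`Σ_{a : comp. of n into positive parts} f(n,a) Σ_i a_i(a_i−1) x^{a−e_i} = 0`,
where `f(n,a) = ((n−m)!/Π(a_k−1)!) · (n!/Π a_k!) · c^a`. -/
theorem stmt_6 {V : Type*} [Fintype V] (m : ℕ) (hm : Fintype.card V = m) (hm1 : 1 ≤ m)
    (c : V → ℝ) (hc : ∑ i, c i = 0) (n : ℕ) (hn : m + 1 ≤ n) (x : V → ℝ) :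
    ∑ a ∈ (Fintype.piFinset fun _ : V => Finset.range (n + 1)).filter
        (fun a => (∑ k, a k) = n ∧ ∀ k, 1 ≤ a k),
      (((n - m).factorial : ℝ) / ∏ k, ((a k - 1).factorial : ℝ)) *
        ((n.factorial : ℝ) / ∏ k, ((a k).factorial : ℝ)) * (∏ k, c k ^ a k) *
        ∑ i, (a i : ℝ) * ((a i : ℝ) - 1) *
          ∏ k, x k ^ (a k - if k = i then 1 else 0)
      = 0 := by
  classical
  set S := (Fintype.piFinset fun _ : V => Finset.range (n + 1)).filter
      (fun a => (∑ k, a k) = n ∧ ∀ k, 1 ≤ a k) with hS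
  set T := (Fintype.piFinset fun _ : V => Finset.range (n + 1)).filter
      (fun b => (∑ k, b k) = n - 1 ∧ ∀ k, 1 ≤ b k) with hT
  set g : (V → ℕ) → ℝ := fun b =>
    (((n - m).factorial : ℝ) / ∏ k, ((b k - 1).factorial : ℝ)) *
      ((n.factorial : ℝ) / ∏ k, ((b k).factorial : ℝ)) * (∏ k, c k ^ b k) *
      (∏ k, x k ^ b k) with hg
  set G : ℝ := ∑ b ∈ T, g b with hGdef
  have key : ∀ i : V,
      (∑ a ∈ S, (((n - m).factorial : ℝ) / ∏ k, ((a k - 1).factorial : ℝ)) *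
        ((n.factorial : ℝ) / ∏ k, ((a k).factorial : ℝ)) * (∏ k, c k ^ a k) *
        ((a i : ℝ) * ((a i : ℝ) - 1) * ∏ k, x k ^ (a k - if k = i then 1 else 0)))
      = c i * G := by
    intro i
    rw [← Finset.sum_filter_add_sum_filter_not S (fun a => 2 ≤ a i)]
    have hzero : ∑ a ∈ S.filter (fun a => ¬ 2 ≤ a i), (((n - m).factorial : ℝ) / ∏ k, ((a k - 1).factorial : ℝ)) *
        ((n.factorial : ℝ) / ∏ k, ((a k).factorial : ℝ)) * (∏ k, c k ^ a k) *
        ((a i : ℝ) * ((a i : ℝ) - 1) * ∏ k, x k ^ (a k - if k = i then 1 else 0)) = 0 := by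
      refine Finset.sum_eq_zero fun a ha => ?_
      simp only [Finset.mem_filter, hS, Fintype.mem_piFinset, Finset.mem_range] at ha
      have h1 : a i = 1 := by have := ha.1.2.2 i; omega
      rw [h1]
      norm_num
    rw [hzero, add_zero, hGdef, Finset.mul_sum]
    refine Finset.sum_bij' (i := fun a _ => fun k => a k - if k = i then 1 else 0)
      (j := fun b _ => fun k => b k + if k = i then 1 else 0) ?_ ?_ ?_ ?_ ?_
    · -- hi : image in T
      intro a ha
      simp only [Finset.mem_filter, hS, Fintype.mem_piFinset, Finset.mem_range] at ha
      obtain ⟨⟨hmem, hsum, hpos⟩, hai⟩ := ha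
      simp only [hT, Finset.mem_filter, Fintype.mem_piFinset, Finset.mem_range]
      refine ⟨fun k => ?_, ?_, fun k => ?_⟩
      · have := hmem k; split <;> omega
      · have hs1 : ∑ k, (a k - if k = i then 1 else 0)
            = (∑ k, a k) - ∑ k : V, (if k = i then 1 else 0) := by
          refine Finset.sum_tsub_distrib _ fun k _ => ?_
          by_cases hk : k = i
          · rw [if_pos hk, hk]; omega
          · rw [if_neg hk]; omega
        have hs2 : ∑ k : V, (if k = i then 1 else 0) = 1 := by
          simp
        rw [hs1, hs2, hsum]
      · by_cases hk : k = i
        · rw [if_pos hk, hk]; omega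
        · rw [if_neg hk]; exact hpos k
    · -- hj : image in S.filter
      intro b hb
      simp only [hT, Finset.mem_filter, Fintype.mem_piFinset, Finset.mem_range] at hb
      obtain ⟨hmem, hsum, hpos⟩ := hb
      have hbi : b i ≤ n - 1 := by
        calc b i ≤ ∑ k, b k := Finset.single_le_sum (fun k _ => Nat.zero_le _) (Finset.mem_univ i)
        _ = n - 1 := hsum
      simp only [Finset.mem_filter, hS, Fintype.mem_piFinset, Finset.mem_range]
      refine ⟨⟨fun k => ?_, ?_, fun k => ?_⟩, ?_⟩
      · by_cases hk : k = i
        · rw [if_pos hk, hk]; omega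
        · rw [if_neg hk]; have := hmem k; omega
      · have hs1 : ∑ k, (b k + if k = i then 1 else 0)
            = (∑ k, b k) + ∑ k : V, (if k = i then 1 else 0) :=
          Finset.sum_add_distrib
        have hs2 : ∑ k : V, (if k = i then 1 else 0) = 1 := by
          simp
        rw [hs1, hs2, hsum]
        omega
      · have := hpos k; split <;> omega
      · have := hpos i; simp only [if_true, eq_self_iff_true, if_pos]; omega
    · -- left inverse
      intro a ha
      simp only [Finset.mem_filter, hS, Fintype.mem_piFinset, Finset.mem_range] at ha
      funext k
      have h1 := ha.1.2.2 k
      dsimp only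
      split <;> omega
    · -- right inverse
      intro b hb
      funext k
      dsimp only
      split <;> omega
    · -- term equality
      intro a ha
      simp only [Finset.mem_filter, hS, Fintype.mem_piFinset, Finset.mem_range] at ha
      obtain ⟨⟨hmem, hsum, hpos⟩, hai⟩ := ha
      -- abbreviate b := fun k => a k - ite ...
      set b : V → ℕ := fun k => a k - if k = i then 1 else 0 with hb
      have hbi : b i = a i - 1 := by simp [hb]
      have hbk : ∀ k, k ≠ i → b k = a k := fun k hk => by simp [hb, hk]
      have hg1 : ∏ k, ((b k - 1).factorial : ℝ)
          = ((a i - 2).factorial : ℝ) * ∏ k ∈ {i}ᶜ, ((a k - 1).factorial : ℝ) := by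
        rw [Fintype.prod_eq_mul_prod_compl i]
        congr 1
        · rw [hbi, Nat.sub_sub]
        · refine Finset.prod_congr rfl fun k hk => ?_
          simp only [Finset.mem_compl, Finset.mem_singleton] at hk
          rw [hbk k hk]
      have hg2 : ∏ k, ((b k).factorial : ℝ)
          = ((a i - 1).factorial : ℝ) * ∏ k ∈ {i}ᶜ, ((a k).factorial : ℝ) := by
        rw [Fintype.prod_eq_mul_prod_compl i]
        congr 1
        · rw [hbi]
        · refine Finset.prod_congr rfl fun k hk => ?_
          simp only [Finset.mem_compl, Finset.mem_singleton] at hk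
          rw [hbk k hk]
      have hg3 : ∏ k, c k ^ b k = c i ^ (a i - 1) * ∏ k ∈ {i}ᶜ, c k ^ a k := by
        rw [Fintype.prod_eq_mul_prod_compl i]
        congr 1
        · rw [hbi]
        · refine Finset.prod_congr rfl fun k hk => ?_
          simp only [Finset.mem_compl, Finset.mem_singleton] at hk
          rw [hbk k hk]
      have hg4 : ∏ k, x k ^ b k = ∏ k, x k ^ (a k - if k = i then 1 else 0) := rfl
      have hl1 : ∏ k, ((a k - 1).factorial : ℝ)
          = ((a i - 1).factorial : ℝ) * ∏ k ∈ {i}ᶜ, ((a k - 1).factorial : ℝ) :=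
        Fintype.prod_eq_mul_prod_compl i _
      have hl2 : ∏ k, ((a k).factorial : ℝ)
          = ((a i).factorial : ℝ) * ∏ k ∈ {i}ᶜ, ((a k).factorial : ℝ) :=
        Fintype.prod_eq_mul_prod_compl i _
      have hl3 : ∏ k, c k ^ a k = c i ^ a i * ∏ k ∈ {i}ᶜ, c k ^ a k :=
        Fintype.prod_eq_mul_prod_compl i _
      -- numeric facts about a i
      have h2 : 2 ≤ a i := hai
      have f1 : ((a i).factorial : ℝ) = (a i : ℝ) * ((a i - 1).factorial : ℝ) := by
        rw [← Nat.cast_mul]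
        congr 1
        rw [← Nat.mul_factorial_pred (by omega)]
      have f2 : ((a i - 1).factorial : ℝ) = ((a i : ℝ) - 1) * ((a i - 2).factorial : ℝ) := by
        have : (a i - 1) * (a i - 2).factorial = (a i - 1).factorial := by
          have := Nat.mul_factorial_pred (n := a i - 1) (by omega)
          simpa [show a i - 1 - 1 = a i - 2 by omega] using this
        rw [← this]
        push_cast [Nat.cast_sub (by omega : 1 ≤ a i)]
        ring
      have hci : c i ^ a i = c i * c i ^ (a i - 1) := by
        rw [← pow_succ']
        congr 1
        omega
      simp only [hg, hg1, hg2, hg3, hl1, hl2, hl3, hci, f1, f2]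
      have hfac1 : (((a i : ℝ) - 1) : ℝ) * ((a i - 2).factorial : ℝ) ≠ 0 ∨ True := Or.inr trivial
      have nz1 : ((a i - 2).factorial : ℝ) ≠ 0 := Nat.cast_ne_zero.mpr (Nat.factorial_ne_zero _)
      have nz2 : ∏ k ∈ {i}ᶜ, ((a k - 1).factorial : ℝ) ≠ 0 :=
        Finset.prod_ne_zero_iff.mpr fun k _ => Nat.cast_ne_zero.mpr (Nat.factorial_ne_zero _)
      have nz3 : ∏ k ∈ {i}ᶜ, ((a k).factorial : ℝ) ≠ 0 :=
        Finset.prod_ne_zero_iff.mpr fun k _ => Nat.cast_ne_zero.mpr (Nat.factorial_ne_zero _)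
      have nz4 : (a i : ℝ) ≠ 0 := by positivity
      have nz5 : ((a i : ℝ) - 1) ≠ 0 := by
        have : (1:ℝ) < (a i : ℝ) := by exact_mod_cast (by omega : 1 < a i)
        linarith
      field_simp
      ring
  calc ∑ a ∈ S, (((n - m).factorial : ℝ) / ∏ k, ((a k - 1).factorial : ℝ)) *
        ((n.factorial : ℝ) / ∏ k, ((a k).factorial : ℝ)) * (∏ k, c k ^ a k) *
        ∑ i, (a i : ℝ) * ((a i : ℝ) - 1) * ∏ k, x k ^ (a k - if k = i then 1 else 0)
      = ∑ i, ∑ a ∈ S, (((n - m).factorial : ℝ) / ∏ k, ((a k - 1).factorial : ℝ)) *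
        ((n.factorial : ℝ) / ∏ k, ((a k).factorial : ℝ)) * (∏ k, c k ^ a k) *
        ((a i : ℝ) * ((a i : ℝ) - 1) * ∏ k, x k ^ (a k - if k = i then 1 else 0)) := by
        simp_rw [Finset.mul_sum]
        rw [Finset.sum_comm]
    _ = ∑ i, c i * G := Finset.sum_congr rfl fun i _ => key i
    _ = (∑ i, c i) * G := by rw [Finset.sum_mul]
    _ = 0 := by rw [hc, zero_mul]
end
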